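/- If C ⊆ F₂^{n×L} is a (t,1)-deletion-correcting code, then for all distinct X, Y ∈ C, d¹_DC(X,Y) > t, where d¹_DC(X,Y) = ∞ if some rows of X and Y differ in a coordinate other than the first, and otherwise equals the number of rows differing (necessarily only in the first coordinate). Consequently, |C| · Σ_{i=0}^{⌊t/2⌋} C(n,i) ≤ 2^{nL}. -/

import Mathlib

/-- `W` is a possible output of the array `X` through the `(t,s)`-deletion channel:
each row of `W` is a subsequence of the corresponding row of `X` obtained by at most
`s` deletions, and at most `t` rows are shortened. -/
def IsDelOutput (n L t s : ℕ) (X : Fin n → Fin L → ZMod 2)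
    (W : Fin n → List (ZMod 2)) : Prop :=
  (∀ i, (W i).Sublist (List.ofFn (X i))) ∧
  (∀ i, L - s ≤ (W i).length) ∧
  (Finset.univ.filter fun i => (W i).length < L).card ≤ t

/-- `C` is a `(t,s)`-deletion-correcting code: no two distinct codewords can produce
the same output under `(t,s)`-deletion patterns. -/
def IsDCCode (n L t s : ℕ) (C : Set (Fin n → Fin L → ZMod 2)) : Prop :=
  ∀ X ∈ C, ∀ Y ∈ C, ∀ W : Fin n → List (ZMod 2),
    IsDelOutput n L t s X W → IsDelOutput n L t s Y W → X = Y

/-- `d¹(x,y)`: `∞` if `x` and `y` differ in a coordinate other than the first;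
`1` if they differ exactly in the first coordinate; `0` if they are equal. -/
def dOne {L : ℕ} (x y : Fin L → ZMod 2) : ℕ∞ :=
  if ∃ j : Fin L, 1 ≤ (j : ℕ) ∧ x j ≠ y j then ⊤
  else if x = y then 0 else 1

/-- `d¹_DC(X,Y)`: `∞` if some row-pair has `d¹ = ∞`, else the number of rows in which
`X` and `Y` differ (necessarily only in the first coordinate). -/
def dOneDC {n L : ℕ} (X Y : Fin n → Fin L → ZMod 2) : ℕ∞ :=
  if ∃ i, dOne (X i) (Y i) = ⊤ then ⊤
  else ((Finset.univ.filter fun i => X i ≠ Y i).card : ℕ∞)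

/-- if `C` is a `(t,1)`-deletion-correcting code then all distinct
codewords have `d¹_DC` distance greater than `t`, and consequently
`|C| · Σ_{i=0}^{⌊t/2⌋} C(n,i) ≤ 2^{nL}`. -/
theorem stmt_18 (n L t : ℕ) (ht : 0 < t) (htn : t ≤ n) (hL : 0 < L)
    (C : Finset (Fin n → Fin L → ZMod 2)) (hC : IsDCCode n L t 1 ↑C) :
    (∀ X ∈ C, ∀ Y ∈ C, X ≠ Y → (t : ℕ∞) < dOneDC X Y) ∧
    C.card * (∑ i ∈ Finset.range (t / 2 + 1), n.choose i) ≤ 2 ^ (n * L) := by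
  classical
  obtain ⟨m, rfl⟩ := Nat.exists_eq_succ_of_ne_zero hL.ne'
  -- Part 1
  have h1 : ∀ X ∈ C, ∀ Y ∈ C, X ≠ Y → (t : ℕ∞) < dOneDC X Y := by
    intro X hX Y hY hXY
    by_contra hlt
    push_neg at hlt
    have hfin : ¬ ∃ i, dOne (X i) (Y i) = ⊤ := by
      intro h
      rw [dOneDC, if_pos h] at hlt
      exact (lt_irrefl _ (lt_of_le_of_lt hlt (WithTop.coe_lt_top t)))
    have hrow : ∀ i (j : Fin (m + 1)), 1 ≤ (j : ℕ) → X i j = Y i j := by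
      intro i j hj
      by_contra hne
      exact hfin ⟨i, by rw [dOne, if_pos ⟨j, hj, hne⟩]⟩
    have hcard : (Finset.univ.filter fun i => X i ≠ Y i).card ≤ t := by
      rw [dOneDC, if_neg hfin] at hlt
      exact_mod_cast hlt
    set W : Fin n → List (ZMod 2) := fun i =>
      if X i = Y i then List.ofFn (X i) else List.ofFn fun k : Fin m => X i k.succ
      with hW
    have htail : ∀ i, (List.ofFn fun k : Fin m => X i k.succ)
        = List.ofFn fun k : Fin m => Y i k.succ := by
      intro i
      congr 1
      funext k
      exact hrow i k.succ (by simp)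
    have hsubX : ∀ i, (W i).Sublist (List.ofFn (X i)) := by
      intro i
      rw [hW]
      dsimp only
      split
      · exact List.Sublist.refl _
      · rw [List.ofFn_succ]
        exact (List.Sublist.refl _).cons _
    have hsubY : ∀ i, (W i).Sublist (List.ofFn (Y i)) := by
      intro i
      rw [hW]
      dsimp only
      split
      · next h => rw [h]
      · rw [htail i, List.ofFn_succ (f := Y i)]
        exact (List.Sublist.refl _).cons _
    have hlen : ∀ i, (W i).length = if X i = Y i then m + 1 else m := by
      intro i
      rw [hW]
      dsimp only
      split <;> simp
    have hlenW : ∀ i, m + 1 - 1 ≤ (W i).length := by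
      intro i
      rw [hlen i]
      split <;> omega
    have hshort : ∀ Z : Fin n → Fin (m+1) → ZMod 2,
        (Finset.univ.filter fun i => (W i).length < m + 1).card ≤ t := by
      intro _
      refine le_trans (Finset.card_le_card ?_) hcard
      intro i hi
      simp only [Finset.mem_filter, Finset.mem_univ, true_and, hlen i] at hi ⊢
      intro h
      rw [if_pos h] at hi
      omega
    have hout : ∀ Z : Fin n → Fin (m+1) → ZMod 2,
        (∀ i, (W i).Sublist (List.ofFn (Z i))) → IsDelOutput n (m+1) t 1 Z W :=
      fun Z h => ⟨h, hlenW, hshort Z⟩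
    exact hXY (hC X hX Y hY W (hout X hsubX) (hout Y hsubY))
  refine ⟨h1, ?_⟩
  -- Part 2
  set r := t / 2 with hr
  set B : Finset (Finset (Fin n)) := Finset.univ.powerset.filter fun S => S.card ≤ r
    with hB
  have hBcard : B.card = ∑ i ∈ Finset.range (r + 1), n.choose i := by
    have hBe : B = (Finset.range (r + 1)).biUnion
        fun i => Finset.powersetCard i (Finset.univ : Finset (Fin n)) := by
      ext S
      simp [hB, Finset.mem_powersetCard, Nat.lt_succ_iff, eq_comm]
    rw [hBe, Finset.card_biUnion]
    · exact Finset.sum_congr rfl fun i _ => by simp [Finset.card_powersetCard]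
    · intro i _ j _ hij
      dsimp only [Function.onFun]
      rw [Finset.disjoint_left]
      intro S hSi hSj
      rw [Finset.mem_powersetCard] at hSi hSj
      exact hij (hSi.2 ▸ hSj.2)
  set flip : (Fin n → Fin (m+1) → ZMod 2) → Finset (Fin n) →
      (Fin n → Fin (m+1) → ZMod 2) :=
    fun X S i j => if i ∈ S ∧ j = 0 then X i j + 1 else X i j with hflip
  have hinj : Set.InjOn (fun p : _ × _ => flip p.1 p.2) ↑(C ×ˢ B) := by
    rintro ⟨X, S⟩ hXS ⟨Y, S'⟩ hYS' heq
    simp only [Finset.coe_product, Set.mem_prod, Finset.mem_coe, hB,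
      Finset.mem_filter, Finset.mem_powerset] at hXS hYS'
    obtain ⟨hXC, -, hScard⟩ := hXS
    obtain ⟨hYC, -, hS'card⟩ := hYS'
    have heq' : ∀ i j, flip X S i j = flip Y S' i j :=
      fun i j => congrFun (congrFun heq i) j
    have hXYj : ∀ i (j : Fin (m+1)), j ≠ 0 → X i j = Y i j := by
      intro i j hj
      have := heq' i j
      simpa [hflip, hj] using this
    have hXY : X = Y := by
      by_contra hne
      have hgt := h1 X hXC Y hYC hne
      have hfin : ¬ ∃ i, dOne (X i) (Y i) = ⊤ := by
        rintro ⟨i, hi⟩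
        rw [dOne] at hi
        split_ifs at hi with h h2
        · obtain ⟨j, hj1, hj2⟩ := h
          refine hj2 (hXYj i j ?_)
          intro h0
          rw [h0] at hj1
          simp at hj1
        · exact (by simp : (0 : ℕ∞) ≠ ⊤) hi
        · exact (by simp : (1 : ℕ∞) ≠ ⊤) hi
      have hsub : (Finset.univ.filter fun i => X i ≠ Y i) ⊆ S ∪ S' := by
        intro i hi
        simp only [Finset.mem_filter, Finset.mem_univ, true_and] at hi
        by_contra hmem
        rw [Finset.mem_union] at hmem
        push_neg at hmem
        refine hi (funext fun j => ?_)
        by_cases hj : j = 0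
        · subst hj
          have := heq' i 0
          simpa [hflip, hmem.1, hmem.2] using this
        · exact hXYj i j hj
      have hle : (Finset.univ.filter fun i => X i ≠ Y i).card ≤ t := by
        refine le_trans (Finset.card_le_card hsub) ?_
        refine le_trans (Finset.card_union_le _ _) ?_
        omega
      rw [dOneDC, if_neg hfin] at hgt
      exact absurd (Nat.cast_le.mpr hle) (not_le.mpr hgt)
    subst hXY
    have hSS : S = S' := by
      ext i
      constructor
      · intro hi
        by_contra hi'
        have := heq' i 0
        simp only [hflip, hi, hi', and_self, if_true, false_and, if_false,
          and_true] at this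
        exact one_ne_zero (by linear_combination this - (X i 0 : ZMod 2))
      · intro hi
        by_contra hi'
        have := heq' i 0
        simp only [hflip, hi, hi', and_self, if_true, false_and, if_false,
          and_true] at this
        exact one_ne_zero (by linear_combination (X i 0 : ZMod 2) - this)
    rw [hSS]
  have hcardle : (C ×ˢ B).card ≤ (Finset.univ :
      Finset (Fin n → Fin (m+1) → ZMod 2)).card :=
    Finset.card_le_card_of_injOn _ (fun _ _ => Finset.mem_univ _) hinj
  have hfull : (Finset.univ : Finset (Fin n → Fin (m+1) → ZMod 2)).card
      = 2 ^ (n * (m + 1)) := by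
    rw [Finset.card_univ, Fintype.card_fun, Fintype.card_fun]
    simp [ZMod, ← pow_mul, mul_comm]
  rw [Finset.card_product, hBcard, hfull] at hcardle
  exact hcardle
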